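/- Let γ*(κ) = √(1 - η*(κ)/κ²) where η*(κ) ∈ [1, 4/3) solves √(1 - η/κ²) = η - 1 + √(η² - η) for κ > 1. Then γ*(κ) → 0 as κ → 1⁺ and γ*(κ)² = 1 - 4/(3κ²) + o(1/κ²) as κ → ∞; in particular γ*(κ) → 1 as κ → ∞. -/

import Mathlib

open Filter

/-- With `η*(κ) ∈ [1, 4/3)` the solution of `√(1 - η/κ²) = η - 1 + √(η² - η)` and
`γ*(κ) = √(1 - η*(κ)/κ²)`: `γ*(κ) → 0` as `κ → 1⁺`,
`γ*(κ)² = 1 - 4/(3κ²) + o(1/κ²)` as `κ → ∞`, and `γ*(κ) → 1` as `κ → ∞`. -/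
theorem stmt_8 (ηstar : ℝ → ℝ)
    (hη : ∀ κ : ℝ, 1 < κ →
      ηstar κ ∈ Set.Ico (1 : ℝ) (4 / 3) ∧
      Real.sqrt (1 - ηstar κ / κ ^ 2) =
        ηstar κ - 1 + Real.sqrt ((ηstar κ) ^ 2 - ηstar κ)) :
    Tendsto (fun κ => Real.sqrt (1 - ηstar κ / κ ^ 2))
        (nhdsWithin 1 (Set.Ioi 1)) (nhds 0) ∧
    (fun κ : ℝ => (Real.sqrt (1 - ηstar κ / κ ^ 2)) ^ 2 - (1 - 4 / (3 * κ ^ 2)))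
        =o[atTop] (fun κ : ℝ => 1 / κ ^ 2) ∧
    Tendsto (fun κ => Real.sqrt (1 - ηstar κ / κ ^ 2)) atTop (nhds 1) := by
  -- key quantitative estimate for large κ
  have key : ∀ κ : ℝ, 2 ≤ κ → 0 ≤ 4/3 - ηstar κ ∧ 4/3 - ηstar κ ≤ (4/3) / κ ^ 2 := by
    intro κ hκ
    have hκ1 : (1 : ℝ) < κ := by linarith
    obtain ⟨⟨hη1, hη2⟩, heq⟩ := hη κ hκ1
    have hκ2 : (4 : ℝ) ≤ κ ^ 2 := by nlinarith
    have hκpos : (0 : ℝ) < κ ^ 2 := by nlinarith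
    set η := ηstar κ with hηdef
    have hx0 : (0 : ℝ) ≤ 1 - η / κ ^ 2 := by
      have : η / κ ^ 2 ≤ (4/3) / 4 := by
        apply div_le_div₀ (by norm_num) (le_of_lt hη2) (by norm_num) hκ2
      linarith
    have hx1 : 1 - η / κ ^ 2 ≤ 1 := by
      have : 0 ≤ η / κ ^ 2 := div_nonneg (by linarith) (le_of_lt hκpos)
      linarith
    set s := Real.sqrt (1 - η / κ ^ 2) with hsdef
    have hs0 : 0 ≤ s := Real.sqrt_nonneg _
    have hs1 : s ≤ 1 := by
      rw [hsdef]
      exact Real.sqrt_le_one.mpr hx1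
    have hssq : s ^ 2 = 1 - η / κ ^ 2 := Real.sq_sqrt hx0
    -- x ≤ √x for x ∈ [0,1]
    have hge : 1 - η / κ ^ 2 ≤ s := by nlinarith
    -- √(η²-η) ≤ 2/3
    have hsqrt23 : Real.sqrt (η ^ 2 - η) ≤ 2/3 := by
      have h1 : η ^ 2 - η ≤ 4/9 := by nlinarith
      calc Real.sqrt (η ^ 2 - η) ≤ Real.sqrt (4/9) := Real.sqrt_le_sqrt h1
        _ = 2/3 := by
          rw [show (4:ℝ)/9 = (2/3)^2 by norm_num, Real.sqrt_sq (by norm_num)]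
    constructor
    · linarith
    · -- 4/3 - η ≤ 1 - s ≤ η/κ² ≤ (4/3)/κ²
      have h1 : 4/3 - η ≤ 1 - s := by rw [heq] at hsdef; linarith [hsdef]
      have h2 : 1 - s ≤ η / κ ^ 2 := by linarith
      have h3 : η / κ ^ 2 ≤ (4/3) / κ ^ 2 := by gcongr
      linarith
  refine ⟨?_, ?_, ?_⟩
  · -- κ → 1⁺
    have hg : Tendsto (fun κ : ℝ => Real.sqrt (1 - 1 / κ ^ 2))
        (nhdsWithin 1 (Set.Ioi 1)) (nhds 0) := by
      have hc : ContinuousAt (fun κ : ℝ => Real.sqrt (1 - 1 / κ ^ 2)) 1 := by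
        apply Real.continuous_sqrt.continuousAt.comp
        exact continuousAt_const.sub
          (ContinuousAt.div continuousAt_const (by fun_prop) (by norm_num))
      have := hc.tendsto
      rw [show Real.sqrt (1 - 1/(1:ℝ)^2) = 0 by norm_num] at this
      exact this.mono_left nhdsWithin_le_nhds
    refine tendsto_of_tendsto_of_tendsto_of_le_of_le' tendsto_const_nhds hg ?_ ?_
    · filter_upwards with κ using Real.sqrt_nonneg _
    · filter_upwards [self_mem_nhdsWithin] with κ hκ
      have hκ1 : (1 : ℝ) < κ := hκ
      obtain ⟨⟨hη1, _⟩, _⟩ := hη κ hκ1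
      apply Real.sqrt_le_sqrt
      have hκpos : (0 : ℝ) < κ ^ 2 := by positivity
      have : (1 : ℝ) / κ ^ 2 ≤ ηstar κ / κ ^ 2 := by gcongr
      linarith
  · -- little-o
    rw [Asymptotics.isLittleO_iff]
    intro c hc
    filter_upwards [eventually_ge_atTop (max 2 (Real.sqrt ((4/3)/c) + 1))] with κ hκ
    have hκ2 : (2 : ℝ) ≤ κ := le_trans (le_max_left _ _) hκ
    have hκ1 : (1 : ℝ) < κ := by linarith
    obtain ⟨⟨hη1, hη2⟩, _⟩ := hη κ hκ1
    have hκpos : (0 : ℝ) < κ ^ 2 := by positivity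
    obtain ⟨k1, k2⟩ := key κ hκ2
    have hx0 : (0 : ℝ) ≤ 1 - ηstar κ / κ ^ 2 := by
      have h4 : (4 : ℝ) ≤ κ ^ 2 := by nlinarith
      have : ηstar κ / κ ^ 2 ≤ (4/3) / 4 :=
        div_le_div₀ (by norm_num) (le_of_lt hη2) (by norm_num) h4
      linarith
    have hssq : Real.sqrt (1 - ηstar κ / κ ^ 2) ^ 2 = 1 - ηstar κ / κ ^ 2 :=
      Real.sq_sqrt hx0
    rw [hssq]
    have hexpr : 1 - ηstar κ / κ ^ 2 - (1 - 4 / (3 * κ ^ 2)) = (4/3 - ηstar κ) / κ ^ 2 := by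
      field_simp
      ring
    rw [hexpr]
    -- bound κ² from below by (4/3)/c
    have hκs : Real.sqrt ((4/3)/c) ≤ κ := by
      have := le_trans (le_max_right 2 (Real.sqrt ((4/3)/c) + 1)) hκ
      linarith
    have hκsq : (4/3)/c ≤ κ ^ 2 := by
      calc (4/3)/c = Real.sqrt ((4/3)/c) ^ 2 :=
            (Real.sq_sqrt (by positivity)).symm
        _ ≤ κ ^ 2 := by
            apply pow_le_pow_left₀ (Real.sqrt_nonneg _) hκs
    rw [Real.norm_eq_abs, Real.norm_eq_abs]
    rw [abs_of_nonneg (div_nonneg k1 (le_of_lt hκpos)),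
        abs_of_nonneg (by positivity : (0:ℝ) ≤ 1 / κ ^ 2)]
    -- (4/3 - η)/κ² ≤ ((4/3)/κ²)/κ² ≤ c * (1/κ²)
    have h1 : (4/3 - ηstar κ) / κ ^ 2 ≤ ((4/3)/κ^2) / κ ^ 2 := by gcongr
    have h2 : ((4/3)/κ^2) / κ ^ 2 ≤ c * (1 / κ ^ 2) := by
      rw [div_div]
      rw [mul_one_div]
      rw [div_le_div_iff₀ (by positivity) (by positivity)]
      have : (4:ℝ)/3 ≤ c * κ ^ 2 := by
        rw [div_le_iff₀ hc] at hκsq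
        linarith [hκsq]
      nlinarith
    linarith
  · -- κ → ∞
    have hlow : Tendsto (fun κ : ℝ => Real.sqrt (1 - (4/3) / κ ^ 2)) atTop (nhds 1) := by
      have h0 : Tendsto (fun κ : ℝ => (4/3 : ℝ) / κ ^ 2) atTop (nhds 0) :=
        Tendsto.div_atTop tendsto_const_nhds (tendsto_pow_atTop two_ne_zero)
      have h1 : Tendsto (fun κ : ℝ => 1 - (4/3) / κ ^ 2) atTop (nhds 1) := by
        simpa using tendsto_const_nhds.sub h0
      have := (Real.continuous_sqrt.tendsto 1).comp h1
      rw [Real.sqrt_one] at this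
      exact this
    refine tendsto_of_tendsto_of_tendsto_of_le_of_le' hlow tendsto_const_nhds ?_ ?_
    · filter_upwards [eventually_ge_atTop (2 : ℝ)] with κ hκ
      have hκ1 : (1 : ℝ) < κ := by linarith
      obtain ⟨⟨hη1, hη2⟩, _⟩ := hη κ hκ1
      apply Real.sqrt_le_sqrt
      have hκpos : (0 : ℝ) < κ ^ 2 := by positivity
      have : ηstar κ / κ ^ 2 ≤ (4/3) / κ ^ 2 := by gcongr
      linarith
    · filter_upwards [eventually_ge_atTop (2 : ℝ)] with κ hκ
      exact Real.sqrt_le_one.mpr (by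
        have hκ1 : (1 : ℝ) < κ := by linarith
        obtain ⟨⟨hη1, _⟩, _⟩ := hη κ hκ1
        have : (0:ℝ) ≤ ηstar κ / κ ^ 2 := div_nonneg (by linarith) (by positivity)
        linarith)
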